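/- arXiv:1405.4487 — 2 statements merged into one kernel-verified Lean document; each statement's English description precedes it below -/
import Mathlib

section
/- Sufficient condition for optimality of no offloading: with the notation of the context, assume L_max ≥ τ₀·S_app (so processing all bits locally meets the latency constraint) and ε₀ ≤ δ, where δ := β_UL·ē_min + k_{rx,1}·β_DL/R_DL^max + k_{rx,2}·β_DL and ē_min := inf{ e_UL(1/r, 1) : 0 < r ≤ R_UL^max }. Then every feasible point of the offloading problem — i.e., every (S₁, t_UL, t_DL) with 0 ≤ S₁ ≤ S_app, t_UL > 0, β_UL·S₁ ≤ t_UL·R_UL^max, β_DL·S₁ ≤ t_DL·R_DL^max, τ₀·(S_app − S₁) ≤ L_max and t_UL + τ₁·S₁ + t_DL ≤ L_max — has total energy e_UL(t_UL, β_UL·S₁) + ε₀·(S_app − S₁) + k_{rx,1}·t_DL + k_{rx,2}·β_DL·S₁ at least ε₀·S_app, which is the energy of processing all bits locally. -/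
open Matrix
open scoped ComplexOrder

/-- Minimum uplink energy: infimum of `k₁ t + k₂ t · Re(Tr Q)` over positive semidefinite
transmit covariance matrices `Q` sustaining `s` bits in time `t` over channel `H` with
bandwidth `W`. -/
noncomputable def eUL {nF nMT : ℕ} (H : Matrix (Fin nF) (Fin nMT) ℂ)
    (W k1 k2 : ℝ) (t s : ℝ) : ℝ :=
  sInf { e : ℝ | ∃ Q : Matrix (Fin nMT) (Fin nMT) ℂ, Q.PosSemidef ∧
    s ≤ W * t * Real.logb 2 (((1 : Matrix (Fin nF) (Fin nF) ℂ) + H * Q * Hᴴ).det.re) ∧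
    e = k1 * t + k2 * t * (Matrix.trace Q).re }

lemma psd_trace_re_nonneg {n : ℕ} (Q : Matrix (Fin n) (Fin n) ℂ) (hQ : Q.PosSemidef) :
    0 ≤ (Matrix.trace Q).re := by
  have h : ∀ i, 0 ≤ (Q i i).re := by
    intro i
    have := hQ.dotProduct_mulVec_nonneg (Pi.single i 1)
    have h2 : star (Pi.single i 1) ⬝ᵥ Q *ᵥ (Pi.single i 1) = Q i i := by
      simp [dotProduct, mulVec, Pi.single_apply]
    rw [h2] at this
    exact (Complex.le_def.mp this).1
  simp only [Matrix.trace, Matrix.diag, Complex.re_sum]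
  exact Finset.sum_nonneg fun i _ => h i

lemma eUL_mem_nonneg {nF nMT : ℕ} (H : Matrix (Fin nF) (Fin nMT) ℂ)
    (W k1 k2 t s : ℝ) (hk1 : 0 ≤ k1) (hk2 : 0 < k2) (ht : 0 < t) :
    ∀ e ∈ { e : ℝ | ∃ Q : Matrix (Fin nMT) (Fin nMT) ℂ, Q.PosSemidef ∧
      s ≤ W * t * Real.logb 2 (((1 : Matrix (Fin nF) (Fin nF) ℂ) + H * Q * Hᴴ).det.re) ∧
      e = k1 * t + k2 * t * (Matrix.trace Q).re }, 0 ≤ e := by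
  rintro e ⟨Q, hQ, _, rfl⟩
  have := psd_trace_re_nonneg Q hQ
  positivity

lemma eUL_nonneg {nF nMT : ℕ} (H : Matrix (Fin nF) (Fin nMT) ℂ)
    (W k1 k2 t s : ℝ) (hk1 : 0 ≤ k1) (hk2 : 0 < k2) (ht : 0 < t) :
    0 ≤ eUL H W k1 k2 t s :=
  Real.sInf_nonneg (eUL_mem_nonneg H W k1 k2 t s hk1 hk2 ht)

/-- Sufficient condition for optimality of no offloading: if local processing meets the
latency constraint (`L_max ≥ τ₀ S_app`) and the local per-bit energy does not exceed the
per-bit offloading energy (`ε₀ ≤ δ`), then every feasible point of the offloading problem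
spends at least the all-local energy `ε₀ S_app`. -/
theorem no_offloading_optimal
    (nF nMT : ℕ) (H : Matrix (Fin nF) (Fin nMT) ℂ)
    (W k1 k2 Sapp ε₀ τ₀ τ₁ βUL βDL RUL RDL krx1 krx2 Lmax : ℝ)
    (hW : 0 < W) (hk1 : 0 ≤ k1) (hk2 : 0 < k2)
    (hSapp : 0 < Sapp) (hε₀ : 0 < ε₀) (hτ₀ : 0 < τ₀) (hτ₁ : 0 < τ₁)
    (hβUL : 1 ≤ βUL) (hβDL : 0 < βDL) (hRUL : 0 < RUL) (hRDL : 0 < RDL)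
    (hkrx1 : 0 ≤ krx1) (hkrx2 : 0 ≤ krx2) (hLmax : 0 < Lmax)
    (emin δ : ℝ)
    (hemin : emin = sInf { e : ℝ | ∃ r : ℝ, 0 < r ∧ r ≤ RUL ∧ e = eUL H W k1 k2 (1 / r) 1 })
    (hδ : δ = βUL * emin + krx1 * βDL / RDL + krx2 * βDL)
    (hfeas : τ₀ * Sapp ≤ Lmax) (hεδ : ε₀ ≤ δ) :
    ∀ S₁ tUL tDL : ℝ, 0 ≤ S₁ → S₁ ≤ Sapp → 0 < tUL →
      βUL * S₁ ≤ tUL * RUL → βDL * S₁ ≤ tDL * RDL →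
      τ₀ * (Sapp - S₁) ≤ Lmax → tUL + τ₁ * S₁ + tDL ≤ Lmax →
      ε₀ * Sapp ≤ eUL H W k1 k2 tUL (βUL * S₁) + ε₀ * (Sapp - S₁) + krx1 * tDL +
        krx2 * (βDL * S₁) := by
  intro S₁ tUL tDL hS₁ hS₁le htUL hULcap hDLcap hlat1 hlat2
  -- the outer set defining emin is bounded below by 0 and contains eUL(1/r,1) for 0<r≤RUL
  have hEset_bdd : ∀ e ∈ { e : ℝ | ∃ r : ℝ, 0 < r ∧ r ≤ RUL ∧ e = eUL H W k1 k2 (1 / r) 1 },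
      (0:ℝ) ≤ e := by
    rintro e ⟨r, hr, _, rfl⟩
    exact eUL_nonneg H W k1 k2 _ 1 hk1 hk2 (by positivity)
  have hemin_le : ∀ r : ℝ, 0 < r → r ≤ RUL → emin ≤ eUL H W k1 k2 (1 / r) 1 := by
    intro r hr hrRUL
    rw [hemin]
    exact csInf_le ⟨0, hEset_bdd⟩ ⟨r, hr, hrRUL, rfl⟩
  have hDL0 : 0 ≤ tDL := by nlinarith
  rcases eq_or_lt_of_le hS₁ with h0 | h0
  · -- S₁ = 0
    subst h0
    have he := eUL_nonneg H W k1 k2 tUL (βUL * 0) hk1 hk2 htUL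
    nlinarith [mul_nonneg hkrx1 hDL0]
  · -- S₁ > 0
    set s := βUL * S₁ with hs_def
    have hs : 0 < s := by positivity
    set r := s / tUL with hr_def
    have hr : 0 < r := by positivity
    have hrRUL : r ≤ RUL := by
      rw [hr_def, div_le_iff₀ htUL]
      linarith [hULcap]
    have hinv : 1 / r = tUL / s := by
      rw [hr_def, one_div_div]
    -- key claim : s * emin ≤ eUL tUL s
    have hkey : s * emin ≤ eUL H W k1 k2 tUL s := by
      set A := { e : ℝ | ∃ Q : Matrix (Fin nMT) (Fin nMT) ℂ, Q.PosSemidef ∧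
        s ≤ W * tUL * Real.logb 2 (((1 : Matrix (Fin nF) (Fin nF) ℂ) + H * Q * Hᴴ).det.re) ∧
        e = k1 * tUL + k2 * tUL * (Matrix.trace Q).re } with hA
      have heUL : eUL H W k1 k2 tUL s = sInf A := rfl
      rcases Set.eq_empty_or_nonempty A with hAe | hAne
      · -- A empty : eUL(tUL,s)=0 and eUL(tUL/s,1)=0 so emin ≤ 0
        have hB : { e : ℝ | ∃ Q : Matrix (Fin nMT) (Fin nMT) ℂ, Q.PosSemidef ∧
            (1:ℝ) ≤ W * (tUL / s) *
              Real.logb 2 (((1 : Matrix (Fin nF) (Fin nF) ℂ) + H * Q * Hᴴ).det.re) ∧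
            e = k1 * (tUL / s) + k2 * (tUL / s) * (Matrix.trace Q).re } = ∅ := by
          rw [Set.eq_empty_iff_forall_notMem]
          rintro e ⟨Q, hQ, hc, _⟩
          apply Set.eq_empty_iff_forall_notMem.mp hAe
            (k1 * tUL + k2 * tUL * (Matrix.trace Q).re)
          refine ⟨Q, hQ, ?_, rfl⟩
          have : W * (tUL / s) * Real.logb 2
              (((1 : Matrix (Fin nF) (Fin nF) ℂ) + H * Q * Hᴴ).det.re)
              = W * tUL * Real.logb 2
              (((1 : Matrix (Fin nF) (Fin nF) ℂ) + H * Q * Hᴴ).det.re) / s := by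
            ring
          rw [this] at hc
          calc s = s * 1 := by ring
          _ ≤ s * (W * tUL * Real.logb 2
              (((1 : Matrix (Fin nF) (Fin nF) ℂ) + H * Q * Hᴴ).det.re) / s) :=
            by exact mul_le_mul_of_nonneg_left hc hs.le
          _ = _ := by field_simp
        have heB : eUL H W k1 k2 (tUL / s) 1 = 0 := by
          unfold eUL
          rw [hB, Real.sInf_empty]
        have : emin ≤ 0 := by
          have := hemin_le r hr hrRUL
          rw [hinv, heB] at this
          exact this
        rw [heUL, hAe, Real.sInf_empty]
        nlinarith
      · refine heUL ▸ le_csInf hAne ?_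
        rintro e ⟨Q, hQ, hc, rfl⟩
        -- e / s is in the set for eUL(tUL/s, 1)
        have hmem : k1 * (tUL / s) + k2 * (tUL / s) * (Matrix.trace Q).re ∈
            { e : ℝ | ∃ Q : Matrix (Fin nMT) (Fin nMT) ℂ, Q.PosSemidef ∧
            (1:ℝ) ≤ W * (tUL / s) *
              Real.logb 2 (((1 : Matrix (Fin nF) (Fin nF) ℂ) + H * Q * Hᴴ).det.re) ∧
            e = k1 * (tUL / s) + k2 * (tUL / s) * (Matrix.trace Q).re } := by
          refine ⟨Q, hQ, ?_, rfl⟩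
          rw [show W * (tUL / s) * Real.logb 2
              (((1 : Matrix (Fin nF) (Fin nF) ℂ) + H * Q * Hᴴ).det.re)
              = W * tUL * Real.logb 2
              (((1 : Matrix (Fin nF) (Fin nF) ℂ) + H * Q * Hᴴ).det.re) / s by ring,
            le_div_iff₀ hs, one_mul]
          exact hc
        have h1 : eUL H W k1 k2 (tUL / s) 1 ≤
            k1 * (tUL / s) + k2 * (tUL / s) * (Matrix.trace Q).re :=
          csInf_le ⟨0, eUL_mem_nonneg H W k1 k2 (tUL / s) 1 hk1 hk2 (by positivity)⟩ hmem
        have h2 : emin ≤ eUL H W k1 k2 (tUL / s) 1 := hinv ▸ hemin_le r hr hrRUL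
        have h3 : s * (k1 * (tUL / s) + k2 * (tUL / s) * (Matrix.trace Q).re)
            = k1 * tUL + k2 * tUL * (Matrix.trace Q).re := by
          field_simp
        calc s * emin ≤ s * (k1 * (tUL / s) + k2 * (tUL / s) * (Matrix.trace Q).re) :=
              mul_le_mul_of_nonneg_left (h2.trans h1) hs.le
          _ = _ := h3
    -- downlink bound
    have hDL : krx1 * (βDL * S₁ / RDL) ≤ krx1 * tDL := by
      apply mul_le_mul_of_nonneg_left _ hkrx1
      rw [div_le_iff₀ hRDL]
      linarith
    have hεS : ε₀ * S₁ ≤ δ * S₁ := mul_le_mul_of_nonneg_right hεδ hS₁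
    have heq : δ * S₁ = s * emin + krx1 * (βDL * S₁ / RDL) + krx2 * (βDL * S₁) := by
      rw [hδ, hs_def]; ring
    have hring : ε₀ * Sapp = ε₀ * S₁ + ε₀ * (Sapp - S₁) := by ring
    linarith [hkey, hDL, hεS, heq]
end

section
/- The minimum uplink energy function is continuous on the open quadrant: the function (t,s) ↦ e_UL(t,s) is continuous on {(t,s) ∈ ℝ² : t > 0, s > 0}. -/
open Matrix
open scoped ComplexOrder

lemma complex_pos_re {z : ℂ} (h : 0 < z) : 0 < z.re ∧ z = (z.re : ℂ) := by
  rw [Complex.lt_def] at h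
  refine ⟨by simpa using h.1, ?_⟩
  apply Complex.ext <;> simp [← h.2]

open scoped MatrixOrder in
lemma det_convex_mix {n : ℕ} {A B : Matrix (Fin n) (Fin n) ℂ}
    (hA : A.PosDef) (hB : B.PosDef) {a b : ℝ} (ha : 0 ≤ a) (hb : 0 ≤ b) (hab : a + b = 1) :
    A.det.re ^ a * B.det.re ^ b ≤ (((a:ℂ) • A + (b:ℂ) • B).det.re) := by
  classical
  obtain ⟨hAre, hAeq⟩ := complex_pos_re hA.det_pos
  obtain ⟨hBre, hBeq⟩ := complex_pos_re hB.det_pos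
  set S := CFC.sqrt A with hSdef
  have hS : S.PosSemidef := (CFC.sqrt_nonneg A).posSemidef
  have hSS : S * S = A := CFC.sqrt_mul_sqrt_self A hA.posSemidef.nonneg
  have hdetSS : S.det * S.det = A.det := by rw [← det_mul, hSS]
  have hdetS : IsUnit S.det := by
    refine isUnit_iff_ne_zero.mpr (fun h0 => ?_)
    rw [h0, zero_mul] at hdetSS
    exact (ne_of_gt hA.det_pos) hdetSS.symm
  have hST : S * S⁻¹ = 1 := Matrix.mul_nonsing_inv S hdetS
  have hTS : S⁻¹ * S = 1 := Matrix.nonsing_inv_mul S hdetS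
  have hT : (S⁻¹).PosSemidef := hS.inv
  have hTH : (S⁻¹)ᴴ = S⁻¹ := hT.1
  set C := S⁻¹ * B * (S⁻¹)ᴴ with hCdef
  have hC : C.PosSemidef := hB.posSemidef.mul_mul_conjTranspose_same S⁻¹
  have hCh : C.IsHermitian := hC.1
  set lam := hCh.eigenvalues with hlam
  have hlam0 : ∀ i, 0 ≤ lam i := fun i => hC.eigenvalues_nonneg i
  -- mixture decomposition
  have hmid : S * C * S = B := by
    rw [hCdef, hTH]
    calc S * (S⁻¹ * B * S⁻¹) * S = S * S⁻¹ * B * (S⁻¹ * S) := by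
          simp only [Matrix.mul_assoc]
      _ = B := by rw [hST, hTS, Matrix.one_mul, Matrix.mul_one]
  have key : (a:ℂ) • A + (b:ℂ) • B = S * ((a:ℂ) • 1 + (b:ℂ) • C) * S := by
    rw [Matrix.mul_add, Matrix.add_mul, Matrix.mul_smul, Matrix.mul_smul,
      Matrix.smul_mul, Matrix.smul_mul, Matrix.mul_one, hSS, hmid]
  -- determinant of the middle factor via spectral theorem
  set U : Matrix (Fin n) (Fin n) ℂ := (hCh.eigenvectorUnitary : Matrix (Fin n) (Fin n) ℂ) with hU
  have hUU : U * star U = 1 := (Matrix.mem_unitaryGroup_iff).mp hCh.eigenvectorUnitary.2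
  have hsp : C = U * diagonal (RCLike.ofReal ∘ lam) * star U := hCh.spectral_theorem
  have key2 : (a:ℂ) • 1 + (b:ℂ) • C
      = U * ((a:ℂ) • 1 + (b:ℂ) • diagonal (RCLike.ofReal ∘ lam)) * star U := by
    rw [Matrix.mul_add, Matrix.add_mul, Matrix.mul_smul, Matrix.mul_smul, Matrix.smul_mul,
      Matrix.smul_mul, Matrix.mul_one, hUU, ← hsp]
  have hdetmid : ((a:ℂ) • 1 + (b:ℂ) • C).det = ((∏ i, (a + b * lam i) : ℝ) : ℂ) := by
    rw [key2, det_mul, det_mul, mul_right_comm, ← det_mul, hUU, det_one, one_mul]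
    have : (a:ℂ) • (1 : Matrix (Fin n) (Fin n) ℂ) + (b:ℂ) • diagonal (RCLike.ofReal ∘ lam)
        = diagonal (fun i => ((a + b * lam i : ℝ) : ℂ)) := by
      ext i j
      rcases eq_or_ne i j with h | h
      · subst h
        simp only [Matrix.add_apply, Matrix.smul_apply, Matrix.one_apply_eq,
          Matrix.diagonal_apply_eq, Function.comp_apply, smul_eq_mul, RCLike.ofReal_alg, Complex.real_smul, mul_one]
        push_cast
        ring
      · simp [Matrix.diagonal_apply_ne _ h, Matrix.one_apply_ne h]
    rw [this, det_diagonal]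
    push_cast
    ring
  have hdetmix : ((a:ℂ) • A + (b:ℂ) • B).det
      = ((A.det.re * ∏ i, (a + b * lam i) : ℝ) : ℂ) := by
    rw [key, det_mul, det_mul, mul_right_comm, hdetSS, hdetmid, hAeq]
    simp only [Complex.ofReal_mul, Complex.ofReal_re]
  -- product of eigenvalues
  have hdetC : C.det = ((∏ i, lam i : ℝ) : ℂ) := by
    rw [hCh.det_eq_prod_eigenvalues]
    push_cast
    rfl
  have hprod : (∏ i, lam i) * A.det.re = B.det.re := by
    have h1 : (S⁻¹).det * S.det = 1 := by rw [← det_mul, hTS, det_one]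
    have h2 : C.det * A.det = B.det := by
      rw [hCdef, hTH, det_mul, det_mul, ← hdetSS]
      calc (S⁻¹).det * B.det * (S⁻¹).det * (S.det * S.det)
          = B.det * (((S⁻¹).det * S.det) * ((S⁻¹).det * S.det)) := by ring
        _ = B.det := by rw [h1]; ring
    rw [hdetC, hAeq, hBeq] at h2
    exact_mod_cast h2
  have hprodnn : 0 ≤ ∏ i, lam i := Finset.prod_nonneg (fun i _ => hlam0 i)
  -- AM-GM per factor
  have hAM : (∏ i, lam i) ^ b ≤ ∏ i, (a + b * lam i) := by
    rw [← Real.finset_prod_rpow _ _ (fun i _ => hlam0 i)]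
    refine Finset.prod_le_prod (fun i _ => Real.rpow_nonneg (hlam0 i) b) (fun i _ => ?_)
    have := Real.geom_mean_le_arith_mean2_weighted ha hb zero_le_one (hlam0 i) hab
    simpa [Real.one_rpow] using this
  have hre : (((a:ℂ) • A + (b:ℂ) • B).det.re) = A.det.re * ∏ i, (a + b * lam i) := by
    rw [hdetmix]; exact Complex.ofReal_re _
  rw [hre]
  have hP : (∏ i, lam i) = B.det.re / A.det.re := by
    rw [eq_div_iff (ne_of_gt hAre)]
    exact hprod
  calc A.det.re ^ a * B.det.re ^ b
      = A.det.re * ((∏ i, lam i) ^ b) := by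
        rw [hP, Real.div_rpow hBre.le hAre.le,
          show a = 1 - b by linarith, Real.rpow_sub hAre, Real.rpow_one]
        ring
    _ ≤ A.det.re * ∏ i, (a + b * lam i) := by
        exact mul_le_mul_of_nonneg_left hAM hAre.le

section Aux

variable {nF nMT : ℕ}

/-- Feasible traces set. -/
def trSet (H : Matrix (Fin nF) (Fin nMT) ℂ) (c : ℝ) : Set ℝ :=
  {x : ℝ | ∃ Q : Matrix (Fin nMT) (Fin nMT) ℂ, Q.PosSemidef ∧
    c ≤ Real.logb 2 (((1 : Matrix (Fin nF) (Fin nF) ℂ) + H * Q * Hᴴ).det.re) ∧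
    x = (Matrix.trace Q).re}

noncomputable def Fmin (H : Matrix (Fin nF) (Fin nMT) ℂ) (c : ℝ) : ℝ := sInf (trSet H c)

lemma onePlus_posDef (H : Matrix (Fin nF) (Fin nMT) ℂ) {Q : Matrix (Fin nMT) (Fin nMT) ℂ}
    (hQ : Q.PosSemidef) : ((1 : Matrix (Fin nF) (Fin nF) ℂ) + H * Q * Hᴴ).PosDef :=
  Matrix.PosDef.add_posSemidef Matrix.PosDef.one (hQ.mul_mul_conjTranspose_same H)

lemma smul_posSemidef {Q : Matrix (Fin nMT) (Fin nMT) ℂ} (hQ : Q.PosSemidef) {x : ℝ}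
    (hx : 0 ≤ x) : ((x : ℂ) • Q).PosSemidef := by
  refine Matrix.PosSemidef.of_dotProduct_mulVec_nonneg ?_ ?_
  · rw [Matrix.IsHermitian, Matrix.conjTranspose_smul, Complex.star_def, Complex.conj_ofReal,
      hQ.1]
  · intro y
    have h := hQ.dotProduct_mulVec_nonneg y
    rw [Complex.le_def] at h ⊢
    rw [Matrix.smul_mulVec, dotProduct_smul]
    constructor
    · simp only [smul_eq_mul, Complex.re_ofReal_mul, Complex.zero_re] at h ⊢
      exact mul_nonneg hx h.1
    · simp only [smul_eq_mul, Complex.mul_im, Complex.ofReal_re, Complex.ofReal_im,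
        Complex.zero_im] at h ⊢
      rw [← h.2]; ring

lemma trace_re_nonneg {Q : Matrix (Fin nMT) (Fin nMT) ℂ} (hQ : Q.PosSemidef) :
    0 ≤ (Matrix.trace Q).re := by
  rw [Matrix.trace, Complex.re_sum]
  refine Finset.sum_nonneg (fun i _ => ?_)
  have h := hQ.dotProduct_mulVec_nonneg (Pi.single i 1)
  have hval : star (Pi.single i 1 : Fin nMT → ℂ) ⬝ᵥ (Q *ᵥ Pi.single i 1) = Q i i := by
    simp [dotProduct, Matrix.mulVec, Pi.single_apply, Finset.mul_sum,
      apply_ite (starRingEnd ℂ)]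
  rw [hval, Complex.le_def] at h
  simpa using h.1

lemma trSet_bddBelow (H : Matrix (Fin nF) (Fin nMT) ℂ) (c : ℝ) : BddBelow (trSet H c) := by
  refine ⟨0, fun x hx => ?_⟩
  obtain ⟨Q, hQ, _, hxe⟩ := hx
  rw [hxe]
  exact trace_re_nonneg hQ

lemma trSet_nonempty {H : Matrix (Fin nF) (Fin nMT) ℂ} (hH : H ≠ 0) (c : ℝ) :
    (trSet H c).Nonempty := by
  classical
  -- find a nonzero column of H
  have : ∃ i j, H i j ≠ 0 := by
    by_contra hcon
    push_neg at hcon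
    exact hH (by ext i j; simpa using hcon i j)
  obtain ⟨i0, j0, hij⟩ := this
  set r : ℝ := ∑ i, Complex.normSq (H i j0) with hr
  have hrpos : 0 < r := by
    refine Finset.sum_pos' (fun i _ => Complex.normSq_nonneg _) ⟨i0, Finset.mem_univ _, ?_⟩
    exact Complex.normSq_pos.mpr hij
  set m : ℝ := max c 0 with hm
  set x : ℝ := ((2 : ℝ) ^ m - 1) / r with hx
  have h2m : (1 : ℝ) ≤ (2 : ℝ) ^ m := by
    rw [show (1:ℝ) = (2:ℝ) ^ (0:ℝ) by simp]
    exact Real.rpow_le_rpow_of_exponent_le (by norm_num) (le_max_right _ _)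
  have hxnn : 0 ≤ x := div_nonneg (by linarith) hrpos.le
  set Q : Matrix (Fin nMT) (Fin nMT) ℂ := (x : ℂ) • Matrix.single j0 j0 1 with hQdef
  have hE : (Matrix.single j0 j0 (1:ℂ)).PosSemidef := by
    refine Matrix.PosSemidef.of_dotProduct_mulVec_nonneg ?_ ?_
    · rw [Matrix.IsHermitian]
      ext a b
      simp [Matrix.conjTranspose_apply, Matrix.single, and_comm,
        apply_ite (starRingEnd ℂ)]
    · intro y
      have hmv : (Matrix.single j0 j0 (1:ℂ)) *ᵥ y = Pi.single j0 (y j0) := by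
        funext a
        simp [Matrix.mulVec, dotProduct, Matrix.single, Pi.single_apply,
          ite_and, eq_comm]
      rw [hmv]
      have : star y ⬝ᵥ Pi.single j0 (y j0) = star (y j0) * y j0 := by
        simp [dotProduct, Pi.single_apply]
      rw [this]
      exact star_mul_self_nonneg (y j0)
  have hQpsd : Q.PosSemidef := smul_posSemidef hE hxnn
  refine ⟨x, Q, hQpsd, ?_, ?_⟩
  · -- the capacity constraint
    have hform : (1 : Matrix (Fin nF) (Fin nF) ℂ) + H * Q * Hᴴ
        = 1 + Matrix.replicateCol Unit (fun a => (x:ℂ) * H a j0) * Matrix.replicateRow Unit (fun b => star (H b j0)) := by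
      congr 1
      ext a b
      simp only [Matrix.mul_apply, Matrix.replicateCol_apply, Matrix.replicateRow_apply, Finset.univ_unique,
        Finset.sum_singleton, Matrix.conjTranspose_apply, hQdef, Matrix.smul_apply,
        Matrix.single, Matrix.of_apply, smul_eq_mul]
      rw [Finset.sum_eq_single j0]
      · simp only [and_true, mul_ite, mul_one, mul_zero, Finset.sum_ite_eq, Finset.mem_univ,
          if_true]
        ring
      · intro k _ hk
        simp [Ne.symm hk]
      · simp
    have hdet : ((1 : Matrix (Fin nF) (Fin nF) ℂ) + H * Q * Hᴴ).det = ((1 + x * r : ℝ) : ℂ) := by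
      rw [hform, Matrix.det_one_add_replicateCol_mul_replicateRow]
      have : (fun b => star (H b j0)) ⬝ᵥ (fun a => (x:ℂ) * H a j0) = ((x * r : ℝ) : ℂ) := by
        simp only [dotProduct, hr]
        push_cast
        rw [Finset.mul_sum]
        refine Finset.sum_congr rfl (fun i _ => ?_)
        rw [Complex.star_def, mul_left_comm, ← Complex.normSq_eq_conj_mul_self]
      rw [this]
      push_cast
      ring
    have hxr : 1 + x * r = (2:ℝ) ^ m := by
      rw [hx, div_mul_cancel₀ _ hrpos.ne']
      ring
    rw [hdet]
    simp only [Complex.ofReal_re]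
    rw [hxr, Real.logb_rpow (by norm_num) (by norm_num)]
    exact le_max_left _ _
  · rw [hQdef, Matrix.trace_smul, Matrix.trace_single_eq_same]
    simp

end Aux

section Main

variable {nF nMT : ℕ}

lemma Fmin_convex {H : Matrix (Fin nF) (Fin nMT) ℂ} (hH : H ≠ 0) :
    ConvexOn ℝ Set.univ (Fmin H) := by
  refine ⟨convex_univ, fun c₁ _ c₂ _ a b ha hb hab => ?_⟩
  simp only [smul_eq_mul]
  refine le_of_forall_pos_le_add (fun ε hε => ?_)
  obtain ⟨x₁, hx₁, hx₁lt⟩ := exists_lt_of_csInf_lt (trSet_nonempty hH c₁)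
    (lt_add_of_pos_right (sInf (trSet H c₁)) (half_pos hε))
  obtain ⟨x₂, hx₂, hx₂lt⟩ := exists_lt_of_csInf_lt (trSet_nonempty hH c₂)
    (lt_add_of_pos_right (sInf (trSet H c₂)) (half_pos hε))
  obtain ⟨Q₁, hQ₁, hc₁, hx₁e⟩ := hx₁
  obtain ⟨Q₂, hQ₂, hc₂, hx₂e⟩ := hx₂
  set A := (1 : Matrix (Fin nF) (Fin nF) ℂ) + H * Q₁ * Hᴴ with hA
  set B := (1 : Matrix (Fin nF) (Fin nF) ℂ) + H * Q₂ * Hᴴ with hB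
  have hApd : A.PosDef := onePlus_posDef H hQ₁
  have hBpd : B.PosDef := onePlus_posDef H hQ₂
  obtain ⟨hAre, _⟩ := complex_pos_re hApd.det_pos
  obtain ⟨hBre, _⟩ := complex_pos_re hBpd.det_pos
  set Q : Matrix (Fin nMT) (Fin nMT) ℂ := (a:ℂ) • Q₁ + (b:ℂ) • Q₂ with hQdef
  have hQpsd : Q.PosSemidef := (smul_posSemidef hQ₁ ha).add (smul_posSemidef hQ₂ hb)
  have hmix : (1 : Matrix (Fin nF) (Fin nF) ℂ) + H * Q * Hᴴ = (a:ℂ) • A + (b:ℂ) • B := by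
    have hone : (a:ℂ) • (1 : Matrix (Fin nF) (Fin nF) ℂ) + (b:ℂ) • 1 = 1 := by
      rw [← add_smul]
      norm_cast
      rw [hab, one_smul]
    have hexp : H * Q * Hᴴ = (a:ℂ) • (H * Q₁ * Hᴴ) + (b:ℂ) • (H * Q₂ * Hᴴ) := by
      rw [hQdef, Matrix.mul_add, Matrix.add_mul, Matrix.mul_smul, Matrix.mul_smul,
        Matrix.smul_mul, Matrix.smul_mul]
    calc (1 : Matrix (Fin nF) (Fin nF) ℂ) + H * Q * Hᴴ
        = ((a:ℂ) • 1 + (b:ℂ) • 1) + ((a:ℂ) • (H * Q₁ * Hᴴ) + (b:ℂ) • (H * Q₂ * Hᴴ)) := by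
          rw [hone, hexp]
      _ = (a:ℂ) • A + (b:ℂ) • B := by rw [hA, hB, smul_add, smul_add]; abel
  have hdetle : A.det.re ^ a * B.det.re ^ b
      ≤ ((1 : Matrix (Fin nF) (Fin nF) ℂ) + H * Q * Hᴴ).det.re := by
    rw [hmix]
    exact det_convex_mix hApd hBpd ha hb hab
  have hfe : a * c₁ + b * c₂
      ≤ Real.logb 2 (((1 : Matrix (Fin nF) (Fin nF) ℂ) + H * Q * Hᴴ).det.re) := by
    have h1 : a * c₁ + b * c₂ ≤ a * Real.logb 2 A.det.re + b * Real.logb 2 B.det.re :=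
      add_le_add (mul_le_mul_of_nonneg_left hc₁ ha) (mul_le_mul_of_nonneg_left hc₂ hb)
    have h2 : a * Real.logb 2 A.det.re + b * Real.logb 2 B.det.re
        = Real.logb 2 (A.det.re ^ a * B.det.re ^ b) := by
      rw [Real.logb_mul (ne_of_gt (Real.rpow_pos_of_pos hAre a))
        (ne_of_gt (Real.rpow_pos_of_pos hBre b)),
        Real.logb_rpow_eq_mul_logb_of_pos hAre, Real.logb_rpow_eq_mul_logb_of_pos hBre]
    have h3 : Real.logb 2 (A.det.re ^ a * B.det.re ^ b)
        ≤ Real.logb 2 (((1 : Matrix (Fin nF) (Fin nF) ℂ) + H * Q * Hᴴ).det.re) :=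
      Real.logb_le_logb_of_le (by norm_num)
        (mul_pos (Real.rpow_pos_of_pos hAre a) (Real.rpow_pos_of_pos hBre b)) hdetle
    linarith
  have htr : (Matrix.trace Q).re = a * x₁ + b * x₂ := by
    rw [hQdef, Matrix.trace_add, Matrix.trace_smul, Matrix.trace_smul, hx₁e, hx₂e]
    simp [Complex.add_re, Complex.re_ofReal_mul, smul_eq_mul]
  have hmem : a * x₁ + b * x₂ ∈ trSet H (a * c₁ + b * c₂) := ⟨Q, hQpsd, hfe, htr.symm⟩
  have hle : Fmin H (a * c₁ + b * c₂) ≤ a * x₁ + b * x₂ :=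
    csInf_le (trSet_bddBelow H _) hmem
  have : a * x₁ + b * x₂ ≤ a * Fmin H c₁ + b * Fmin H c₂ + ε := by
    have l1 : a * x₁ ≤ a * (Fmin H c₁ + ε / 2) := mul_le_mul_of_nonneg_left hx₁lt.le ha
    have l2 : b * x₂ ≤ b * (Fmin H c₂ + ε / 2) := mul_le_mul_of_nonneg_left hx₂lt.le hb
    nlinarith [hε.le]
  linarith

lemma Fmin_continuous {H : Matrix (Fin nF) (Fin nMT) ℂ} (hH : H ≠ 0) :
    Continuous (Fmin H) := by
  rw [← continuousOn_univ]
  exact (Fmin_convex hH).continuousOn isOpen_univ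

lemma eUL_eq_formula (H : Matrix (Fin nF) (Fin nMT) ℂ) (hH : H ≠ 0) {W k1 k2 t s : ℝ}
    (hW : 0 < W) (ht : 0 < t) (hk2 : 0 ≤ k2) :
    eUL H W k1 k2 t s = k1 * t + k2 * t * Fmin H (s / (W * t)) := by
  have hWt : 0 < W * t := mul_pos hW ht
  have himg : { e : ℝ | ∃ Q : Matrix (Fin nMT) (Fin nMT) ℂ, Q.PosSemidef ∧
      s ≤ W * t * Real.logb 2 (((1 : Matrix (Fin nF) (Fin nF) ℂ) + H * Q * Hᴴ).det.re) ∧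
      e = k1 * t + k2 * t * (Matrix.trace Q).re }
      = (fun x => k1 * t + k2 * t * x) '' trSet H (s / (W * t)) := by
    ext e
    constructor
    · rintro ⟨Q, h1, h2, h3⟩
      exact ⟨(Matrix.trace Q).re, ⟨Q, h1, (div_le_iff₀' hWt).mpr h2, rfl⟩, h3.symm⟩
    · rintro ⟨x, ⟨Q, h1, h2, h3⟩, h4⟩
      exact ⟨Q, h1, (div_le_iff₀' hWt).mp h2, by rw [← h4, h3]⟩
  have hmono : Monotone (fun x : ℝ => k1 * t + k2 * t * x) :=
    monotone_const.add (monotone_id.const_mul (mul_nonneg hk2 ht.le))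
  rw [eUL]
  rw [himg, ← Monotone.map_csInf_of_continuousAt (by fun_prop) hmono
    (trSet_nonempty hH _) (trSet_bddBelow H _)]
  rfl

end Main

/-- For a nonzero channel, the minimum uplink energy function `(t,s) ↦ e_UL(t,s)` is
continuous on the open quadrant `{(t,s) : t > 0, s > 0}`. -/
theorem eUL_continuousOn (nF nMT : ℕ) (H : Matrix (Fin nF) (Fin nMT) ℂ) (hH : H ≠ 0)
    (W k1 k2 : ℝ) (hW : 0 < W) (hk1 : 0 ≤ k1) (hk2 : 0 < k2) :
    ContinuousOn (fun p : ℝ × ℝ => eUL H W k1 k2 p.1 p.2)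
      {p : ℝ × ℝ | 0 < p.1 ∧ 0 < p.2} := by
  have hF : Continuous (Fmin H) := Fmin_continuous hH
  have hgoal : ContinuousOn
      (fun p : ℝ × ℝ => k1 * p.1 + k2 * p.1 * Fmin H (p.2 / (W * p.1)))
      {p : ℝ × ℝ | 0 < p.1 ∧ 0 < p.2} := by
    refine ContinuousOn.add (by fun_prop) (ContinuousOn.mul (by fun_prop) ?_)
    refine hF.comp_continuousOn ?_
    refine ContinuousOn.div continuousOn_snd (by fun_prop) ?_
    intro p hp
    exact ne_of_gt (mul_pos hW hp.1)
  refine hgoal.congr (fun p hp => ?_)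
  exact eUL_eq_formula H hH hW hp.1 hk2.le
end
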